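/- Let C_L be a chirp of slope a (i.e., C_L = C_{L_a,b} for some b) and L = L_a = {(τ,aτ)}. Then the ambiguity function A(C_L,C_L)[v] = ⟨π(v)C_L, C_L⟩ satisfies: A(C_L,C_L)[v] = ψ_L(v) (a complex number of absolute value 1, given by the eigenvalue character) when v ∈ L, and A(C_L,C_L)[v] = 0 when v ∉ L. -/

import Mathlib

open Complex BigOperators Finset

noncomputable def ee (N : ℕ) (t : ZMod N) : ℂ :=
  Complex.exp (2 * Real.pi * Complex.I * (t.val : ℂ) / (N : ℂ))

noncomputable def heis (N : ℕ) (τ ω : ZMod N) (f : ZMod N → ℂ) : ZMod N → ℂ :=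
  fun n => ee N (-(2⁻¹ * τ * ω)) * ee N (ω * n) * f (n - τ)

noncomputable def inn (N : ℕ) [NeZero N] (f g : ZMod N → ℂ) : ℂ :=
  ∑ n : ZMod N, f n * (starRingEnd ℂ) (g n)

noncomputable def amb (N : ℕ) [NeZero N] (f g : ZMod N → ℂ) (τ ω : ZMod N) : ℂ :=
  inn N (heis N τ ω f) g

noncomputable def chirp (N : ℕ) (a b : ZMod N) : ZMod N → ℂ :=
  fun n => ee N (2⁻¹ * a * n ^ 2 - b * n) / (Real.sqrt N : ℝ)

def delta (N : ℕ) (b : ZMod N) : ZMod N → ℂ :=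
  fun n => if n = b then 1 else 0

section Aux

variable (N : ℕ) [NeZero N]

lemma ee_eq' (t : ZMod N) :
    ee N t = Complex.exp (((2 * Real.pi * t.val / N : ℝ) : ℂ) * Complex.I) := by
  unfold ee
  congr 1
  push_cast
  ring

lemma ee_abs (t : ZMod N) : ‖ee N t‖ = 1 := by
  rw [ee_eq']
  exact Complex.norm_exp_ofReal_mul_I _

lemma ee_ne_zero (t : ZMod N) : ee N t ≠ 0 := Complex.exp_ne_zero _

lemma ee_zero : ee N 0 = 1 := by
  unfold ee
  simp

lemma ee_add (s t : ZMod N) : ee N (s + t) = ee N s * ee N t := by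
  unfold ee
  rw [← Complex.exp_add]
  set k := (s.val + t.val) / N with hkdef
  have hk : s.val + t.val = (s + t).val + N * k := by
    rw [ZMod.val_add, hkdef]
    exact (Nat.mod_add_div _ _).symm
  have hNne : (N : ℂ) ≠ 0 := Nat.cast_ne_zero.mpr (NeZero.ne N)
  have hc : (s.val : ℂ) + t.val = ((s + t).val : ℂ) + N * k := by exact_mod_cast hk
  have hcancel : 2 * (Real.pi : ℂ) * Complex.I * ((N : ℂ) * k) / N = (k : ℕ) * (2 * (Real.pi:ℂ) * Complex.I) := by
    rw [mul_comm ((N:ℂ)) ((k:ℂ)), ← mul_assoc, mul_div_assoc, div_self hNne, mul_one]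
    ring
  have harg : 2 * (Real.pi:ℂ) * Complex.I * ↑s.val / ↑N + 2 * (Real.pi:ℂ) * Complex.I * ↑t.val / ↑N
      = 2 * (Real.pi:ℂ) * Complex.I * ↑(s + t).val / ↑N + (k : ℕ) * (2 * (Real.pi:ℂ) * Complex.I) := by
    rw [← add_div, ← mul_add, hc, mul_add, add_div, hcancel]
  rw [harg, Complex.exp_add, Complex.exp_nat_mul_two_pi_mul_I, mul_one]

lemma ee_neg_mul (t : ZMod N) : ee N t * ee N (-t) = 1 := by
  rw [← ee_add, add_neg_cancel, ee_zero]

lemma ee_conj (t : ZMod N) : (starRingEnd ℂ) (ee N t) = ee N (-t) := by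
  have h1 : ee N t * (starRingEnd ℂ) (ee N t) = 1 := by
    rw [Complex.mul_conj]
    norm_cast
    rw [Complex.normSq_eq_norm_sq, ee_abs]
    norm_num
  have h2 := ee_neg_mul N t
  exact mul_left_cancel₀ (ee_ne_zero N t) (h1.trans h2.symm)

lemma ee_eq_one_iff (t : ZMod N) (ht : t ≠ 0) : ee N t ≠ 1 := by
  intro h
  unfold ee at h
  rw [Complex.exp_eq_one_iff] at h
  obtain ⟨n, hn⟩ := h
  have hNne : (N : ℂ) ≠ 0 := Nat.cast_ne_zero.mpr (NeZero.ne N)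
  have hAne : (2 * (Real.pi : ℂ) * Complex.I) ≠ 0 := by
    apply mul_ne_zero (mul_ne_zero two_ne_zero _) Complex.I_ne_zero
    exact_mod_cast Real.pi_ne_zero
  have hn' : 2 * (Real.pi:ℂ) * Complex.I * ↑t.val = ↑n * (2 * (Real.pi:ℂ) * Complex.I) * ↑N := by
    have := congrArg (fun z => z * (N : ℂ)) hn
    simpa [div_mul_cancel₀, hNne] using this
  have h2 : (t.val : ℂ) = ((n * N : ℤ) : ℂ) := by
    apply mul_left_cancel₀ hAne
    push_cast
    linear_combination hn'
  have h3 : (t.val : ℤ) = n * N := by exact_mod_cast h2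
  have hlt : (t.val : ℤ) < N := by exact_mod_cast ZMod.val_lt t
  have hpos : 0 < (t.val : ℤ) := by
    have : t.val ≠ 0 := fun h0 => ht ((ZMod.val_eq_zero t).mp h0)
    omega
  have hN1 : (1 : ℤ) ≤ N := by exact_mod_cast Nat.one_le_iff_ne_zero.mpr (NeZero.ne N)
  rcases lt_trichotomy n 0 with hn0 | hn0 | hn0
  · nlinarith
  · rw [hn0, zero_mul] at h3; omega
  · nlinarith

lemma sum_ee_eq_zero (c : ZMod N) (hc : c ≠ 0) :
    ∑ n : ZMod N, ee N (c * n) = 0 := by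
  set S := ∑ n : ZMod N, ee N (c * n) with hS
  have hshift : ∑ n : ZMod N, ee N (c * (1 + n)) = S := by
    exact Equiv.sum_comp (Equiv.addLeft (1 : ZMod N)) (fun n => ee N (c * n))
  have hmul : ee N c * S = S := by
    conv_rhs => rw [← hshift]
    rw [hS, Finset.mul_sum]
    apply Finset.sum_congr rfl
    intro n _
    rw [← ee_add]
    congr 1
    ring
  have hne : ee N c ≠ 1 := ee_eq_one_iff N c hc
  have : (ee N c - 1) * S = 0 := by rw [sub_mul, one_mul, hmul, sub_self]
  rcases mul_eq_zero.mp this with h | h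
  · exact absurd (by linear_combination h : ee N c = 1) hne
  · exact h

end Aux

lemma amb_chirp (N : ℕ) [NeZero N] (hN : N.Prime) (hodd : Odd N) (a b τ ω : ZMod N) :
    amb N (chirp N a b) (chirp N a b) τ ω
      = ee N (2⁻¹ * a * τ ^ 2 + b * τ - 2⁻¹ * τ * ω)
        * (∑ n : ZMod N, ee N ((ω - a * τ) * n)) / N := by
  haveI := Fact.mk hN
  have h2ne : (2 : ZMod N) ≠ 0 := by
    have hndvd : ¬ (N ∣ 2) := by
      intro h
      have h2' : N ≤ 2 := Nat.le_of_dvd two_pos h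
      have hge : 2 ≤ N := hN.two_le
      have hodd' := Nat.odd_iff.mp hodd
      omega
    intro h
    have h0 : ((2 : ℕ) : ZMod N) = 0 := by exact_mod_cast h
    exact absurd ((ZMod.natCast_eq_zero_iff 2 N).mp h0) hndvd
  have h2 : (2⁻¹ : ZMod N) * 2 = 1 := inv_mul_cancel₀ h2ne
  have hNR : (0:ℝ) ≤ N := Nat.cast_nonneg N
  have hsq : ((Real.sqrt N : ℝ) : ℂ) * ((Real.sqrt N : ℝ) : ℂ) = (N : ℂ) := by
    norm_cast
    exact Real.mul_self_sqrt hNR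
  have hs : ((Real.sqrt N : ℝ) : ℂ) ≠ 0 := by
    have : (0:ℝ) < Real.sqrt N := Real.sqrt_pos.mpr (by exact_mod_cast Nat.pos_of_ne_zero (NeZero.ne N))
    exact_mod_cast this.ne'
  unfold amb inn heis chirp
  rw [Finset.mul_sum, Finset.sum_div]
  apply Finset.sum_congr rfl
  intro n _
  rw [map_div₀, ee_conj, Complex.conj_ofReal]
  have hexp : -(2⁻¹ * τ * ω) + ω * n + (2⁻¹ * a * (n - τ) ^ 2 - b * (n - τ))
      + -(2⁻¹ * a * n ^ 2 - b * n)
      = (ω - a * τ) * n + (2⁻¹ * a * τ ^ 2 + b * τ - 2⁻¹ * τ * ω) := by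
    linear_combination (-(a * n * τ)) * h2
  have key := congrArg (ee N) hexp
  rw [ee_add, ee_add, ee_add, ee_add] at key
  calc ee N (-(2⁻¹ * τ * ω)) * ee N (ω * n)
        * (ee N (2⁻¹ * a * (n - τ) ^ 2 - b * (n - τ)) / ((Real.sqrt N : ℝ) : ℂ))
        * (ee N (-(2⁻¹ * a * n ^ 2 - b * n)) / ((Real.sqrt N : ℝ) : ℂ))
      = (ee N (-(2⁻¹ * τ * ω)) * ee N (ω * n) * ee N (2⁻¹ * a * (n - τ) ^ 2 - b * (n - τ))
          * ee N (-(2⁻¹ * a * n ^ 2 - b * n)))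
        / (((Real.sqrt N : ℝ) : ℂ) * ((Real.sqrt N : ℝ) : ℂ)) := by ring
    _ = (ee N ((ω - a * τ) * n) * ee N (2⁻¹ * a * τ ^ 2 + b * τ - 2⁻¹ * τ * ω)) / (N : ℂ) := by
        rw [key, hsq]
    _ = ee N (2⁻¹ * a * τ ^ 2 + b * τ - 2⁻¹ * τ * ω) * ee N ((ω - a * τ) * n) / (N : ℂ) := by ring

theorem chirp_ambiguity_supported_on_line (N : ℕ) (hN : N.Prime) (hodd : Odd N) [NeZero N]
    (a b : ZMod N) :
    ∃ ψ : ZMod N → ℂ,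
      (∀ τ : ZMod N, ‖ψ τ‖ = 1 ∧
        amb N (chirp N a b) (chirp N a b) τ (a * τ) = ψ τ) ∧
      (∀ τ ω : ZMod N, ω ≠ a * τ → amb N (chirp N a b) (chirp N a b) τ ω = 0) := by
  refine ⟨fun τ => ee N (b * τ), ?_, ?_⟩
  · intro τ
    refine ⟨ee_abs N _, ?_⟩
    rw [amb_chirp N hN hodd a b τ (a * τ)]
    have h0 : a * τ - a * τ = 0 := sub_self _
    have hsum : ∑ n : ZMod N, ee N ((a * τ - a * τ) * n) = N := by
      rw [h0]
      simp [ee_zero, Finset.card_univ, ZMod.card]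
    rw [hsum]
    have hNne : (N : ℂ) ≠ 0 := Nat.cast_ne_zero.mpr (NeZero.ne N)
    have hC : 2⁻¹ * a * τ ^ 2 + b * τ - 2⁻¹ * τ * (a * τ) = b * τ := by ring
    rw [hC]
    field_simp
  · intro τ ω hω
    rw [amb_chirp N hN hodd a b τ ω]
    have : ω - a * τ ≠ 0 := sub_ne_zero.mpr hω
    rw [sum_ee_eq_zero N _ this]
    simp
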